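/- Let q be a prime power, K = F_{q²}, and let C be a linear [n,k]_{q²} code whose Hermitian hull Hull_H(C) has dimension ℓ. Then the number of Hermitian self-orthogonal codewords of C \ Hull_H(C), i.e. the number of c ∈ C with c ∉ Hull_H(C) and ⟨c,c⟩_H = 0, equals (N₀^{q+1}(k−ℓ) − 1) · q^{2ℓ}. -/

import Mathlib

open scoped BigOperators
open Matrix

noncomputable section

/-- The Hermitian inner product `⟨x,y⟩_H = ∑ i, x i * (y i)^q`, where the conjugation
`x ↦ x^q` is given by the ring homomorphism `σ`. -/
def hermInner {K : Type*} [Field K] {n : ℕ} (σ : K →+* K) (x y : Fin n → K) : K :=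
  ∑ i, x i * σ (y i)

/-- The Hermitian dual `C^{⊥H} = {y | ⟨x,y⟩_H = 0 for all x ∈ C}` of a code `C ⊆ K^n`. -/
def hermDual {K : Type*} [Field K] {n : ℕ} (σ : K →+* K) (C : Submodule K (Fin n → K)) :
    Submodule K (Fin n → K) where
  carrier := {y | ∀ x ∈ C, hermInner σ x y = 0}
  zero_mem' := by
    intro x hx
    simp [hermInner]
  add_mem' := by
    intro y z hy hz x hx
    have h1 := hy x hx
    have h2 := hz x hx
    simp only [hermInner, Pi.add_apply, map_add, mul_add, Finset.sum_add_distrib] at h1 h2 ⊢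
    rw [h1, h2, add_zero]
  smul_mem' := by
    intro c y hy x hx
    have h := hy x hx
    simp only [hermInner, Pi.smul_apply, smul_eq_mul, _root_.map_mul] at h ⊢
    calc ∑ i, x i * (σ c * σ (y i)) = σ c * ∑ i, x i * σ (y i) := by
          rw [Finset.mul_sum]; exact Finset.sum_congr rfl fun i _ => by ring
      _ = 0 := by rw [h, mul_zero]

/-- `N₀^{q+1}(m) = q^{m-1}(q^m - q + 1)` for odd `m` and `q^{m-1}(q^m + q - 1)` for even
`m`: the number of solutions of `x₁^{q+1} + ⋯ + x_m^{q+1} = 0` in `F_{q²}^m`. -/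
def N0 (q : ℤ) (m : ℕ) : ℤ :=
  if Odd m then q ^ (m - 1) * (q ^ m - q + 1) else q ^ (m - 1) * (q ^ m + q - 1)

universe u

namespace CSOAux



/-- Number of isotropic vectors in a nondegenerate Hermitian space of dim `m`. -/
def A (q : ℤ) : ℕ → ℤ
  | 0 => 1
  | (m+1) => (q+1) * q ^ (2*m) - q * A q m

lemma A_eq_N0 (q : ℤ) : ∀ m : ℕ, 1 ≤ m → A q m = N0 q m := by
  intro m
  induction m with
  | zero => omega
  | succ m ih =>
    intro _
    rcases Nat.eq_zero_or_pos m with rfl | hm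
    · simp [A, N0]
    · obtain ⟨m', rfl⟩ : ∃ m', m = m' + 1 := ⟨m-1, by omega⟩
      rw [show A q (m' + 1 + 1) = (q+1) * q ^ (2*(m'+1)) - q * A q (m'+1) from rfl,
        ih (by omega)]
      simp only [N0, Nat.add_sub_cancel]
      rcases Nat.even_or_odd m' with he | ho
      · have h2 : Odd (m' + 1) := Even.add_one he
        have h3 : ¬ Odd (m' + 1 + 1) := by
          rw [Nat.odd_iff] at h2 ⊢; omega
        rw [if_pos h2, if_neg h3]
        have e1 : (2*(m'+1)) = (m'+1) + (m'+1) := by ring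
        rw [e1, pow_add, show (m'+1+1) = (m'+1) + 1 from rfl, pow_add, pow_add, pow_one]
        ring
      · have h2 : ¬ Odd (m' + 1) := by
          rw [Nat.odd_iff] at ho ⊢; omega
        have h3 : Odd (m' + 1 + 1) := by
          rw [Nat.odd_iff] at ho ⊢; omega
        rw [if_neg h2, if_pos h3]
        have e1 : (2*(m'+1)) = (m'+1) + (m'+1) := by ring
        rw [e1, pow_add, show (m'+1+1) = (m'+1) + 1 from rfl, pow_add, pow_add, pow_one]
        ring


lemma card_pow_fiber_zero (q : ℕ) {K : Type*} [Field K] [Fintype K] :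
    Nat.card {c : K // c ^ (q + 1) = (0:K)} = 1 := by
  have hiff : ∀ c : K, c ^ (q + 1) = 0 ↔ c = 0 := fun c =>
    pow_eq_zero_iff (by omega)
  rw [Nat.card_congr (Equiv.subtypeEquivRight hiff)]
  haveI : Unique {c : K // c = (0:K)} := ⟨⟨⟨0, rfl⟩⟩, by rintro ⟨c, rfl⟩; rfl⟩
  exact Nat.card_unique

lemma card_pow_fiber (q : ℕ) (hq : 2 ≤ q) {K : Type*} [Field K] [Fintype K]
    (hK : Fintype.card K = q ^ 2) (a : K) (ha : a ^ q = a) (h0 : a ≠ 0) :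
    Nat.card {c : K // c ^ (q + 1) = a} = q + 1 := by
  classical
  have hdvd : (q + 1) * (q - 1) = q ^ 2 - 1 := by
    obtain ⟨r, rfl⟩ : ∃ r, q = r + 2 := ⟨q - 2, by omega⟩
    show (r + 3) * (r + 1) = (r + 2) ^ 2 - 1
    have h1 : (r + 2) ^ 2 = r * r + 4 * r + 4 := by ring
    have h2 : (r + 3) * (r + 1) = r * r + 4 * r + 3 := by ring
    omega
  · obtain ⟨g, hg⟩ := IsCyclic.exists_generator (α := Kˣ)
    have hog : orderOf g = q ^ 2 - 1 := by
      rw [orderOf_eq_card_of_forall_mem_zpowers hg, Nat.card_eq_fintype_card,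
        Fintype.card_units, hK]
    have hζord : orderOf (g ^ (q - 1)) = q + 1 := by
      rw [orderOf_pow, hog]
      have hgcd : Nat.gcd (q ^ 2 - 1) (q - 1) = q - 1 :=
        Nat.gcd_eq_right ⟨q + 1, by rw [← hdvd]; ring⟩
      rw [hgcd]
      exact Nat.div_eq_of_eq_mul_left (by omega) hdvd.symm
    have hζ : IsPrimitiveRoot (((g ^ (q - 1) : Kˣ) : K)) (q + 1) := by
      rw [IsPrimitiveRoot.coe_units_iff]
      exact hζord ▸ IsPrimitiveRoot.orderOf _
    -- a is a (q+1)-st power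
    have hu1 : a ^ (q - 1) = 1 := by
      have h1 : a ^ (q - 1) * a = 1 * a := by
        rw [← pow_succ, show q - 1 + 1 = q by omega, ha, one_mul]
      exact mul_right_cancel₀ h0 h1
    set u : Kˣ := Units.mk0 a h0 with hu
    obtain ⟨t, ht0⟩ := mem_powers_iff_mem_zpowers.mpr (hg u)
    have ht : g ^ t = u := ht0
    have hut : u ^ (q - 1) = 1 := by
      ext
      push_cast
      simpa [hu] using hu1
    have hdvd2 : (q + 1) * (q - 1) ∣ t * (q - 1) := by
      rw [hdvd, ← hog]
      exact orderOf_dvd_of_pow_eq_one (by rw [pow_mul, ht, hut])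
    have hdvd3 : (q + 1) ∣ t := by
      have := (Nat.mul_dvd_mul_iff_right (show 0 < q - 1 by omega)).mp hdvd2
      exact this
    obtain ⟨s, hs⟩ := hdvd3
    have hα : (((g ^ s : Kˣ) : K)) ^ (q + 1) = a := by
      have : (g ^ s) ^ (q + 1) = u := by
        rw [← pow_mul, mul_comm s, ← hs, ht]
      calc (((g ^ s : Kˣ) : K)) ^ (q + 1) = (((g ^ s) ^ (q+1) : Kˣ) : K) := by push_cast; ring
        _ = a := by rw [this]; rfl
    set α : K := ((g ^ s : Kˣ) : K) with hαdef
    have hαne : α ≠ 0 := Units.ne_zero _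
    have e : {c : K // c ^ (q + 1) = a} ≃ {c : K // c ^ (q + 1) = 1} :=
      { toFun := fun c => ⟨c.1 * α⁻¹, by
          rw [mul_pow, inv_pow, c.2, ← hα, mul_inv_cancel₀ (pow_ne_zero _ hαne)]⟩
        invFun := fun c => ⟨c.1 * α, by rw [mul_pow, c.2, one_mul, hα]⟩
        left_inv := fun c => by
          ext; simp [mul_assoc, inv_mul_cancel₀ hαne]
        right_inv := fun c => by
          ext; simp [mul_assoc, mul_inv_cancel₀ hαne] }
    have hfe : (Finset.univ.filter fun c : K => c ^ (q + 1) = 1)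
        = Polynomial.nthRootsFinset (q + 1) (1 : K) := by
      ext c
      simp [Polynomial.mem_nthRootsFinset (show 0 < q + 1 by omega) (1 : K)]
    rw [Nat.card_congr e, Nat.card_eq_fintype_card, Fintype.card_subtype, hfe,
      hζ.card_nthRootsFinset]


lemma iso_count (q : ℕ) (hq : 2 ≤ q) {K : Type u} [Field K] [Fintype K]
    (hK : Fintype.card K = q ^ 2)
    (σ : K →+* K) (hσ : ∀ x : K, σ x = x ^ q) :
    ∀ (m : ℕ) (V : Type u) [AddCommGroup V] [Module K V] [Module.Finite K V]
      (B : V → V → K),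
      Module.finrank K V = m →
      (∀ x y z : V, B (x + y) z = B x z + B y z) →
      (∀ (c : K) (x y : V), B (c • x) y = c * B x y) →
      (∀ x y : V, B y x = σ (B x y)) →
      (∀ x : V, (∀ y : V, B x y = 0) → x = 0) →
      (Nat.card {x : V // B x x = 0} : ℤ) = A q m := by
  classical
  have hσσ : ∀ t : K, σ (σ t) = t := by
    intro t
    rw [hσ, hσ, ← pow_mul, ← sq, ← hK, FiniteField.pow_card]
  intro m
  induction m with
  | zero =>
    intro V _ _ _ B hfr hadd hsmul hsymm hnd
    haveI : Subsingleton V := Module.finrank_zero_iff.mp hfr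
    have hB00 : B 0 0 = 0 := by
      have h := hadd 0 0 0
      rw [add_zero] at h
      exact left_eq_add.mp h
    haveI : Unique {x : V // B x x = 0} :=
      ⟨⟨⟨0, hB00⟩⟩, by intro x; ext; exact Subsingleton.elim _ _⟩
    rw [Nat.card_unique]; rfl
  | succ m ih =>
    intro V _ _ _ B hfr hadd₁ hsmul₁ hsymm hnd
    haveI : Finite V := Module.finite_of_finite K
    haveI : Fintype V := Fintype.ofFinite V
    have hadd₂ : ∀ x y z : V, B x (y + z) = B x y + B x z := by
      intro x y z
      rw [hsymm (y + z) x, hadd₁ y z x, _root_.map_add, hsymm x y, hsymm x z, hσσ, hσσ]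
    have hsmul₂ : ∀ (c : K) (x y : V), B x (c • y) = σ c * B x y := by
      intro c x y
      rw [hsymm (c • y) x, hsmul₁ c y x, _root_.map_mul, hsymm x y, hσσ]
    have hzero₁ : ∀ x : V, B 0 x = 0 := by
      intro x
      have h := hadd₁ 0 0 x
      rw [add_zero] at h
      exact (left_eq_add.mp h)
    have hzero₂ : ∀ x : V, B x 0 = 0 := by
      intro x
      rw [hsymm 0 x, hzero₁, _root_.map_zero]
    have hsub₂ : ∀ x y z : V, B x (y - z) = B x y - B x z := by
      intro x y z
      rw [sub_eq_add_neg, hadd₂, ← neg_one_smul K z, hsmul₂]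
      have : σ (-1 : K) = -1 := by rw [_root_.map_neg, _root_.map_one]
      rw [this]; ring
    haveI : Nontrivial V := by
      apply (Module.finrank_pos_iff (R := K)).mp
      rw [hfr]; omega
    -- find an anisotropic vector
    obtain ⟨v, hv⟩ : ∃ v : V, B v v ≠ 0 := by
      by_contra hcon
      push_neg at hcon
      have hpol : ∀ x y : V, B x y + σ (B x y) = 0 := by
        intro x y
        have h := hcon (x + y)
        rw [hadd₁, hadd₂, hadd₂, hcon x, hcon y, hsymm x y] at h
        rw [← h]; ring
      obtain ⟨g, hg⟩ := IsCyclic.exists_generator (α := Kˣ)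
      have hog : orderOf g = q ^ 2 - 1 := by
        rw [orderOf_eq_card_of_forall_mem_zpowers hg, Nat.card_eq_fintype_card,
          Fintype.card_units, hK]
      have hlam : σ ((g : K)) ≠ (g : K) := by
        intro hcontra
        rw [hσ] at hcontra
        have hg0 : (g : K) ≠ 0 := Units.ne_zero g
        have h1 : (g : K) ^ (q - 1) = 1 := by
          have h2 : (g : K) ^ (q - 1) * (g : K) = 1 * (g : K) := by
            rw [← pow_succ, show q - 1 + 1 = q by omega, hcontra, one_mul]
          exact mul_right_cancel₀ hg0 h2
        have h2 : g ^ (q - 1) = 1 := by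
          ext; push_cast; simpa using h1
        have h3 := orderOf_dvd_of_pow_eq_one h2
        rw [hog] at h3
        have h4 := Nat.le_of_dvd (by omega) h3
        have hqq : q < q ^ 2 := by nlinarith
        omega
      have hall : ∀ x y : V, B x y = 0 := by
        intro x y
        have h1 := hpol x y
        have h3 : σ (B x y) = - B x y := eq_neg_of_add_eq_zero_right h1
        have h2 := hpol ((g : K) • x) y
        rw [hsmul₁, _root_.map_mul, h3] at h2
        have h4 : ((g : K) - σ (g : K)) * B x y = 0 := by rw [← h2]; ring
        rcases mul_eq_zero.mp h4 with h5 | h5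
        · exact absurd (sub_eq_zero.mp h5).symm hlam
        · exact h5
      obtain ⟨x, y, hxy⟩ := exists_pair_ne V
      exact hxy (by rw [hnd x (hall x), hnd y (hall y)])
    set a := B v v with hadef
    have haσ : σ a = a := (hsymm v v).symm
    -- the linear functional x ↦ σ (B v x) and its kernel
    let φ : V →ₗ[K] K :=
      { toFun := fun x => σ (B v x)
        map_add' := fun x y => by simp only [hadd₂, _root_.map_add]
        map_smul' := fun c x => by
          simp only [hsmul₂, _root_.map_mul, hσσ, RingHom.id_apply, smul_eq_mul] }
    have hφv : φ v ≠ 0 := by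
      show σ (B v v) ≠ 0
      rw [haσ]; exact hv
    set W := LinearMap.ker φ with hWdef
    have hmemW : ∀ x : V, x ∈ W ↔ B v x = 0 := by
      intro x
      rw [hWdef, LinearMap.mem_ker]
      constructor
      · intro h
        have h2 : σ (σ (B v x)) = σ 0 := congrArg σ h
        rwa [hσσ, _root_.map_zero] at h2
      · intro h
        show σ (B v x) = 0
        rw [h, _root_.map_zero]
    have hfrW : Module.finrank K ↥W = m := by
      have hrn := LinearMap.finrank_range_add_finrank_ker φ
      have hr1 : Module.finrank K (LinearMap.range φ) = 1 := by
        have hne : LinearMap.range φ ≠ ⊥ := by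
          intro hbot
          have hmem : φ v ∈ LinearMap.range φ := ⟨v, rfl⟩
          rw [hbot, Submodule.mem_bot] at hmem
          exact hφv hmem
        have hle : Module.finrank K (LinearMap.range φ) ≤ 1 := by
          have := Submodule.finrank_le (LinearMap.range φ)
          simpa using this
        have hge : Module.finrank K (LinearMap.range φ) ≠ 0 := by
          intro h0
          exact hne (Submodule.finrank_eq_zero.mp h0)
        omega
      rw [hr1, hfr] at hrn
      rw [hWdef]
      omega
    -- decomposition of an arbitrary vector
    set cf : V → K := fun y => σ (B v y) * a⁻¹ with hcf
    set wf : V → V := fun y => y - cf y • v with hwf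
    have hσc : ∀ y : V, σ (cf y) = B v y * a⁻¹ := by
      intro y
      rw [hcf]
      simp only
      rw [_root_.map_mul, hσσ, _root_.map_inv₀, haσ]
    have hwmem : ∀ y : V, B v (wf y) = 0 := by
      intro y
      rw [hwf]
      simp only
      rw [hsub₂, hsmul₂, hσc, mul_assoc, inv_mul_cancel₀ hv, mul_one, sub_self]
    have hy_eq : ∀ y : V, y = cf y • v + wf y := by
      intro y
      rw [hwf]
      simp only
      rw [add_sub_cancel]
    -- nondegeneracy on W
    have hnd' : ∀ x : ↥W, (∀ y : ↥W, B ↑x ↑y = 0) → x = 0 := by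
      intro x hx
      have hxv : B ↑x v = 0 := by
        rw [hsymm v ↑x, (hmemW ↑x).mp x.2, _root_.map_zero]
      have hall : ∀ y : V, B ↑x y = 0 := by
        intro y
        rw [hy_eq y, hadd₂, hsmul₂, hxv, mul_zero, zero_add]
        exact hx ⟨wf y, (hmemW _).mpr (hwmem y)⟩
      exact Subtype.ext (hnd ↑x hall)
    have key := ih ↥W (fun x y => B ↑x ↑y) hfrW
      (fun x y z => by change B (↑x + ↑y) ↑z = _; exact hadd₁ _ _ _)
      (fun c x y => by change B (c • (x:V)) ↑y = _; exact hsmul₁ _ _ _)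
      (fun x y => hsymm ↑x ↑y) hnd'
    -- the equivalence V ≃ K × W
    let e : V ≃ K × ↥W :=
      { toFun := fun y => (cf y, ⟨wf y, (hmemW _).mpr (hwmem y)⟩)
        invFun := fun p => p.1 • v + ↑p.2
        left_inv := fun y => (hy_eq y).symm
        right_inv := fun p => by
          have h1 : cf (p.1 • v + ↑p.2) = p.1 := by
            rw [hcf]
            simp only
            rw [hadd₂, hsmul₂, (hmemW _).mp p.2.2, add_zero, _root_.map_mul, hσσ, haσ,
              mul_assoc, mul_inv_cancel₀ hv, mul_one]
          have h2 : wf (p.1 • v + ↑p.2) = ↑p.2 := by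
            rw [hwf]
            simp only
            rw [h1, add_sub_cancel_left]
          exact Prod.ext h1 (Subtype.ext h2) }
    have hBw : ∀ (c : K) (w : ↥W), B (c • v + ↑w) (c • v + ↑w) = c ^ (q+1) * a + B ↑w ↑w := by
      intro c w
      have hw : B v ↑w = 0 := (hmemW _).mp w.2
      have hw' : B ↑w v = 0 := by rw [hsymm v ↑w, hw, _root_.map_zero]
      rw [hadd₁, hadd₂, hadd₂, hsmul₁, hsmul₁, hsmul₂, hsmul₂, hw, hw', hσ]
      ring_nf
      rw [← hadef]
    have hcount1 : Nat.card {x : V // B x x = 0}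
        = Nat.card {p : K × ↥W // p.1 ^ (q+1) * a + B ↑p.2 ↑p.2 = 0} := by
      apply Nat.card_congr
      apply Equiv.subtypeEquiv e
      intro y
      have h := hBw (cf y) ⟨wf y, (hmemW _).mpr (hwmem y)⟩
      rw [← hy_eq y] at h
      rw [h]
      rfl
    have hsig : {p : K × ↥W // p.1 ^ (q+1) * a + B ↑p.2 ↑p.2 = 0}
        ≃ Σ w : ↥W, {c : K // c ^ (q+1) * a + B ↑w ↑w = 0} :=
      { toFun := fun p => ⟨p.1.2, p.1.1, p.2⟩
        invFun := fun s => ⟨(s.2.1, s.1), s.2.2⟩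
        left_inv := fun p => rfl
        right_inv := fun s => rfl }
    have hfib : ∀ w : ↥W, Fintype.card {c : K // c ^ (q+1) * a + B ↑w ↑w = 0}
        = if B ↑w ↑w = 0 then 1 else q + 1 := by
      intro w
      rw [← Nat.card_eq_fintype_card]
      have hiff : ∀ c : K, (c ^ (q+1) * a + B ↑w ↑w = 0) ↔ c ^ (q+1) = -B ↑w ↑w * a⁻¹ := by
        intro c
        constructor
        · intro h
          have h2 : c ^ (q+1) * a = -B ↑w ↑w := eq_neg_of_add_eq_zero_left h
          field_simp [← h2]
          exact h2
        · intro h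
          rw [h]
          field_simp
          ring
      rw [Nat.card_congr (Equiv.subtypeEquivRight hiff)]
      have hsw : σ (B ↑w ↑w) = B ↑w ↑w := (hsymm ↑w ↑w).symm
      by_cases hzw : B ↑w ↑w = 0
      · rw [if_pos hzw, hzw]
        simp only [neg_zero, zero_mul]
        exact card_pow_fiber_zero q
      · rw [if_neg hzw]
        apply card_pow_fiber q hq hK
        · rw [← hσ, _root_.map_mul, _root_.map_neg, hsw, _root_.map_inv₀, haσ]
        · simp [hzw, hv]
    -- put everything together
    rw [hcount1, Nat.card_congr hsig, Nat.card_eq_fintype_card, Fintype.card_sigma]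
    have hcast : ((∑ w : ↥W, Fintype.card {c : K // c ^ (q+1) * a + B ↑w ↑w = 0} : ℕ) : ℤ)
        = ∑ w : ↥W, (if B ↑w ↑w = 0 then (1:ℤ) else (q + 1 : ℤ)) := by
      push_cast
      refine Finset.sum_congr rfl fun w _ => ?_
      rw [hfib w]
      split_ifs <;> push_cast <;> ring
    rw [hcast]
    have hsplit : ∀ w : ↥W, (if B ↑w ↑w = 0 then (1:ℤ) else (q + 1 : ℤ))
        = (q + 1 : ℤ) - q * (if B ↑w ↑w = 0 then (1:ℤ) else 0) := by
      intro w
      split_ifs <;> ring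
    rw [Finset.sum_congr rfl fun w _ => hsplit w, Finset.sum_sub_distrib,
      Finset.sum_const, ← Finset.mul_sum, Finset.sum_boole]
    have hfilter : (Finset.univ.filter fun w : ↥W => B ↑w ↑w = 0).card
        = Nat.card {w : ↥W // B ↑w ↑w = 0} := by
      rw [Nat.card_eq_fintype_card, Fintype.card_subtype]
    have hcardW : (Fintype.card ↥W : ℤ) = (q : ℤ) ^ (2 * m) := by
      have h1 : Fintype.card ↥W = Fintype.card K ^ Module.finrank K ↥W :=
        Module.card_eq_pow_finrank
      rw [h1, hK, hfrW, ← pow_mul]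
      push_cast
      ring
    rw [hfilter]
    show (Fintype.card ↥W : ℤ) • ((q:ℤ) + 1) - q * (Nat.card {w : ↥W // B ↑w ↑w = 0} : ℤ)
      = A q (m + 1)
    rw [key, show A q (m+1) = (q+1) * (q:ℤ) ^ (2*m) - q * A q m from rfl]
    rw [smul_eq_mul, hcardW]
    ring


lemma iso_count' (q : ℕ) (hq : 2 ≤ q) {K : Type u} [Field K] [Fintype K]
    (hK : Fintype.card K = q ^ 2)
    (σ : K →+* K) (hσ : ∀ x : K, σ x = x ^ q)
    (m : ℕ) (hm : 1 ≤ m) (V : Type u) [AddCommGroup V] [Module K V] [Module.Finite K V]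
    (B : V → V → K)
    (hfr : Module.finrank K V = m)
    (h1 : ∀ x y z : V, B (x + y) z = B x z + B y z)
    (h2 : ∀ (c : K) (x y : V), B (c • x) y = c * B x y)
    (h3 : ∀ x y : V, B y x = σ (B x y))
    (h4 : ∀ x : V, (∀ y : V, B x y = 0) → x = 0) :
    (Nat.card {x : V // B x x = 0} : ℤ) = N0 q m := by
  rw [← A_eq_N0 q m hm]
  exact iso_count q hq hK σ hσ m V B hfr h1 h2 h3 h4

end CSOAux

set_option maxHeartbeats 1000000 in
set_option synthInstance.maxHeartbeats 200000 in
/-- If `C` is a linear `[n,k]_{q²}` code with `ℓ`-dimensional Hermitian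
hull, then the number of Hermitian self-orthogonal codewords of `C \ Hull_H(C)` equals
`(N₀^{q+1}(k-ℓ) - 1) q^{2ℓ}`. -/
theorem card_selfOrthogonal_codewords_outside_hull
    (q : ℕ) (hq : IsPrimePow q)
    {K : Type*} [Field K] [Fintype K] (hK : Fintype.card K = q ^ 2)
    (σ : K →+* K) (hσ : ∀ x : K, σ x = x ^ q)
    (n k ℓ : ℕ) (hℓk : ℓ < k)
    (C : Submodule K (Fin n → K)) (hC : Module.finrank K C = k)
    (hHull : Module.finrank K ↥(C ⊓ hermDual σ C) = ℓ) :
    (Nat.card {c : Fin n → K //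
        c ∈ C ∧ c ∉ C ⊓ hermDual σ C ∧ hermInner σ c c = 0} : ℤ) =
      (N0 q (k - ℓ) - 1) * (q : ℤ) ^ (2 * ℓ) := by
  classical
  have hq2 : 2 ≤ q := hq.two_le
  have hσσ : ∀ x : K, σ (σ x) = x := by
    intro x; rw [hσ, hσ, ← pow_mul, ← sq, ← hK, FiniteField.pow_card]
  set Hull := C ⊓ hermDual σ C with hHulldef
  have hHC : Hull ≤ C := inf_le_left
  set H' : Submodule K ↥C := Hull.comap C.subtype with hH'def
  obtain ⟨D, hD⟩ := Submodule.exists_isCompl H'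
  set B : ↥C → ↥C → K := fun x y => hermInner σ (x : Fin n → K) (y : Fin n → K) with hBdef
  -- basic properties of the Hermitian inner product
  have hadd₁ : ∀ x y z : Fin n → K,
      hermInner σ (x + y) z = hermInner σ x z + hermInner σ y z := by
    intro x y z
    simp [hermInner, add_mul, Finset.sum_add_distrib]
  have hsmul₁ : ∀ (c : K) (x y : Fin n → K),
      hermInner σ (c • x) y = c * hermInner σ x y := by
    intro c x y
    simp only [hermInner, Pi.smul_apply, smul_eq_mul, Finset.mul_sum, mul_assoc]
  have hsymm : ∀ x y : Fin n → K, hermInner σ y x = σ (hermInner σ x y) := by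
    intro x y
    simp only [hermInner, _root_.map_sum, _root_.map_mul, hσσ]
    exact Finset.sum_congr rfl fun i _ => mul_comm _ _
  -- C-level versions
  have haddC : ∀ x y z : ↥C, B (x + y) z = B x z + B y z := fun x y z => hadd₁ ↑x ↑y ↑z
  have hsymmC : ∀ x y : ↥C, B y x = σ (B x y) := fun x y => hsymm ↑x ↑y
  have haddC₂ : ∀ x y z : ↥C, B x (y + z) = B x y + B x z := by
    intro x y z
    rw [hsymmC (y + z) x, haddC y z x, _root_.map_add, hsymmC x y, hsymmC x z, hσσ, hσσ]
  -- membership in Hull, for elements of C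
  have hHull_mem : ∀ x : ↥C, ((x : Fin n → K) ∈ Hull) ↔ ∀ y : ↥C, B y x = 0 := by
    intro x
    constructor
    · intro hx y
      exact (Submodule.mem_inf.mp hx).2 ↑y y.2
    · intro h
      exact Submodule.mem_inf.mpr ⟨x.2, fun z hz => h ⟨z, hz⟩⟩
  have hH'_mem : ∀ x : ↥C, x ∈ H' ↔ ∀ y : ↥C, B y x = 0 := by
    intro x
    rw [hH'def, Submodule.mem_comap]
    exact hHull_mem x
  -- vanishing of B against Hull elements
  have hBu : ∀ u : ↥C, u ∈ H' → ∀ y : ↥C, B y u = 0 ∧ B u y = 0 := by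
    intro u hu y
    have h1 := (hH'_mem u).mp hu y
    refine ⟨h1, ?_⟩
    rw [hsymmC y u, h1, _root_.map_zero]
  -- dimensions
  have hfrH' : Module.finrank K ↥H' = ℓ := by
    rw [← hHull]
    exact (Submodule.comapSubtypeEquivOfLe hHC).finrank_eq
  have hfrD : Module.finrank K ↥D = k - ℓ := by
    have h := Submodule.finrank_add_eq_of_isCompl hD
    rw [hfrH', hC] at h
    omega
  have hkl1 : 1 ≤ k - ℓ := by omega
  -- nondegeneracy on D
  set BD : ↥D → ↥D → K := fun x y => B ↑x ↑y with hBDdef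
  have hndD : ∀ d : ↥D, (∀ d' : ↥D, BD d d' = 0) → d = 0 := by
    intro d hd
    have hall : ∀ y : ↥C, B y ↑d = 0 := by
      intro y
      have hy : (y : ↥C) ∈ H' ⊔ D := by rw [hD.sup_eq_top]; trivial
      obtain ⟨u, hu, w, hw, rfl⟩ := Submodule.mem_sup.mp hy
      rw [haddC]
      have h1 : B u ↑d = 0 := (hBu u hu ↑d).2
      have h2 : B w ↑d = 0 := by
        rw [hsymmC (↑d) w]
        have := hd ⟨w, hw⟩
        rw [hBDdef] at this
        simp only at this
        rw [this, _root_.map_zero]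
      rw [h1, h2, add_zero]
    have hmem : ((↑d : ↥C) : Fin n → K) ∈ Hull := (hHull_mem ↑d).mpr hall
    have hmem2 : (↑d : ↥C) ∈ H' := Submodule.mem_comap.mpr hmem
    have : (↑d : ↥C) = 0 :=
      (Submodule.disjoint_def.mp hD.disjoint) ↑d hmem2 d.2
    exact Subtype.ext this
  -- apply the counting lemma on D
  have keyD := CSOAux.iso_count' q hq2 hK σ hσ (k - ℓ) hkl1 ↥D BD hfrD
    (fun x y z => by
      show B (↑x + ↑y) ↑z = _
      exact haddC _ _ _)
    (fun c x y => by
      show B (c • (x : ↥C)) ↑y = _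
      show hermInner σ (c • ((x : ↥C) : Fin n → K)) _ = _
      exact hsmul₁ _ _ _)
    (fun x y => hsymmC ↑x ↑y) hndD
  have hzeroD : BD 0 0 = 0 := by
    show hermInner σ (((0 : ↥D) : ↥C) : Fin n → K) _ = 0
    simp [hermInner]
  -- count of nonzero isotropic vectors in D
  haveI : Finite ↥D := Module.finite_of_finite K
  haveI : Fintype ↥D := Fintype.ofFinite _
  have hcount2 : (Nat.card {d : ↥D // d ≠ 0 ∧ BD d d = 0} : ℤ) = N0 q (k - ℓ) - 1 := by
    rw [← keyD, Nat.card_eq_fintype_card, Nat.card_eq_fintype_card,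
      Fintype.card_subtype, Fintype.card_subtype]
    have hfe : (Finset.univ.filter fun d : ↥D => d ≠ 0 ∧ BD d d = 0)
        = (Finset.univ.filter fun d : ↥D => BD d d = 0).erase 0 := by
      ext d
      simp [Finset.mem_erase, and_comm]
    rw [hfe, Finset.card_erase_of_mem (by simp [hzeroD])]
    have hpos : 0 < (Finset.univ.filter fun d : ↥D => BD d d = 0).card :=
      Finset.card_pos.mpr ⟨0, by simp [hzeroD]⟩
    rw [Nat.cast_sub hpos]
    push_cast
    ring
  -- main equivalences
  set E := Submodule.prodEquivOfIsCompl H' D hD with hEdef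
  have hiff : ∀ p : ↥H' × ↥D,
      (((E p : ↥C) : Fin n → K) ∉ Hull ∧ B (E p) (E p) = 0)
      ↔ (p.2 ≠ 0 ∧ BD p.2 p.2 = 0) := by
    intro p
    have hEp : (E p : ↥C) = ↑p.1 + ↑p.2 := Submodule.coe_prodEquivOfIsCompl' H' D hD p
    have h1 : (((E p : ↥C) : Fin n → K) ∈ Hull) ↔ p.2 = 0 := by
      constructor
      · intro h
        have hmem : (E p : ↥C) ∈ H' := Submodule.mem_comap.mpr h
        rw [hEp] at hmem
        have hd : (↑p.2 : ↥C) ∈ H' := by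
          have := Submodule.sub_mem H' hmem p.1.2
          simpa using this
        have : (↑p.2 : ↥C) = 0 :=
          (Submodule.disjoint_def.mp hD.disjoint) ↑p.2 hd p.2.2
        exact Subtype.ext this
      · intro h
        rw [hEp, h]
        simp only [ZeroMemClass.coe_zero, add_zero]
        exact Submodule.mem_comap.mp p.1.2
    have h2 : B (E p) (E p) = BD p.2 p.2 := by
      rw [hEp, haddC, haddC₂, haddC₂]
      rw [(hBu ↑p.1 p.1.2 ↑p.1).2, (hBu ↑p.1 p.1.2 ↑p.2).2, (hBu ↑p.1 p.1.2 ↑p.2).1]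
      simp [hBDdef]
    rw [h2]
    exact and_congr_left' (not_congr h1)
  have emain : {c : Fin n → K // c ∈ C ∧ c ∉ Hull ∧ hermInner σ c c = 0}
      ≃ {x : ↥C // (x : Fin n → K) ∉ Hull ∧ B x x = 0} :=
    { toFun := fun c => ⟨⟨c.1, c.2.1⟩, c.2.2.1, c.2.2.2⟩
      invFun := fun x => ⟨↑x.1, x.1.2, x.2.1, x.2.2⟩
      left_inv := fun c => rfl
      right_inv := fun x => rfl }
  have e2 : {p : ↥H' × ↥D // p.2 ≠ 0 ∧ BD p.2 p.2 = 0}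
      ≃ {x : ↥C // (x : Fin n → K) ∉ Hull ∧ B x x = 0} :=
    E.toEquiv.subtypeEquiv fun p => (hiff p).symm
  have e3 : {p : ↥H' × ↥D // p.2 ≠ 0 ∧ BD p.2 p.2 = 0}
      ≃ ↥H' × {d : ↥D // d ≠ 0 ∧ BD d d = 0} :=
    { toFun := fun p => (p.1.1, ⟨p.1.2, p.2⟩)
      invFun := fun x => ⟨(x.1, x.2.1), x.2.2⟩
      left_inv := fun p => rfl
      right_inv := fun x => rfl }
  rw [Nat.card_congr ((emain.trans e2.symm).trans e3), Nat.card_prod]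
  -- cardinality of H'
  haveI : Finite ↥H' := Module.finite_of_finite K
  haveI : Fintype ↥H' := Fintype.ofFinite _
  have hcardH : (Nat.card ↥H' : ℤ) = (q : ℤ) ^ (2 * ℓ) := by
    rw [Nat.card_eq_fintype_card]
    have h1 : Fintype.card ↥H' = Fintype.card K ^ Module.finrank K ↥H' :=
      Module.card_eq_pow_finrank (K := K) (V := ↥H')
    rw [h1, hK, hfrH', ← pow_mul]
    push_cast
    ring
  push_cast
  rw [hcardH, hcount2]
  ring
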